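/- arXiv:math/9710213 — 4 statements merged into one kernel-verified Lean document; each statement's English description precedes it below -/
import Mathlib

section
/- For integers 0=e_0, e_1,...,e_k (nonnegative integers, not all zero) and any fixed j with 1 ≤ j ≤ k, one has the inequality ∑_{i=1}^k e_i(e_i - e_{i-1}) ≥ e_j. -/
lemma int_le_self_mul (d : ℤ) : d ≤ d * d := by
  rcases le_or_gt d 0 with h | h
  · nlinarith
  · have h1 : 1 ≤ d := h
    nlinarith

lemma sum_aux (e : ℕ → ℤ) (h0 : e 0 = 0) (n : ℕ) :
    e n * e n + e n ≤ 2 * ∑ i ∈ Finset.Icc 1 n, e i * (e i - e (i - 1)) := by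
  induction n with
  | zero => simp [h0]
  | succ n ih =>
    rw [Finset.sum_Icc_succ_top (by omega : 1 ≤ n + 1)]
    have hd := int_le_self_mul (e (n + 1) - e n)
    have : n + 1 - 1 = n := by omega
    rw [this]
    nlinarith [ih]

lemma sum_aux2 (e : ℕ → ℤ) (h0 : e 0 = 0) (j : ℕ) :
    ∀ n, j ≤ n →
      2 * e j + e n * e n - e n ≤ 2 * ∑ i ∈ Finset.Icc 1 n, e i * (e i - e (i - 1)) := by
  intro n hn
  induction n, hn using Nat.le_induction with
  | base =>
    have := sum_aux e h0 j
    linarith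
  | succ n hn ih =>
    rw [Finset.sum_Icc_succ_top (by omega : 1 ≤ n + 1)]
    have hd := int_le_self_mul (e n - e (n + 1))
    have : n + 1 - 1 = n := by omega
    rw [this]
    nlinarith [ih]

/-- For nonnegative integers `e 0 = 0, e 1, …, e k`, not all zero among `e 1, …, e k`,
and any `1 ≤ j ≤ k`, one has `∑_{i=1}^k e i * (e i - e (i-1)) ≥ e j`. -/
theorem sum_e_mul_sub_ge (k : ℕ) (e : ℕ → ℤ) (hk : 1 ≤ k) (h0 : e 0 = 0)
    (hnonneg : ∀ i, 0 ≤ e i)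
    (hnotzero : ∃ i, 1 ≤ i ∧ i ≤ k ∧ e i ≠ 0)
    (j : ℕ) (hj1 : 1 ≤ j) (hjk : j ≤ k) :
    e j ≤ ∑ i ∈ Finset.Icc 1 k, e i * (e i - e (i - 1)) := by
  have h2 := sum_aux2 e h0 j k hjk
  have hek := int_le_self_mul (e k)
  linarith
end

section
/- Let y_1, ..., y_{k+1} be integers satisfying y_{k+1} = j + ∑_{i=1}^k y_i for a nonnegative integer j. Then ∑_{i=1}^{k+1} y_i^2 ≥ j. -/
/-- If integers `y 1, …, y (k+1)` satisfy `y (k+1) = j + ∑_{i=1}^k y i` for a nonnegative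
integer `j`, then `∑_{i=1}^{k+1} (y i)^2 ≥ j`. -/
theorem sum_sq_ge_of_linear_constraint (k : ℕ) (hk : 1 ≤ k) (j : ℕ) (y : ℕ → ℤ)
    (hcon : y (k + 1) = (j : ℤ) + ∑ i ∈ Finset.Icc 1 k, y i) :
    (j : ℤ) ≤ ∑ i ∈ Finset.Icc 1 (k + 1), (y i) ^ 2 := by
  have hself : ∀ x : ℤ, x ≤ x ^ 2 := fun x => by nlinarith [sq_nonneg (x - 1)]
  have hneg : ∀ x : ℤ, -x ≤ x ^ 2 := fun x => by nlinarith [sq_nonneg (x + 1)]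
  have hsplit : ∑ i ∈ Finset.Icc 1 (k + 1), (y i) ^ 2
      = (∑ i ∈ Finset.Icc 1 k, (y i) ^ 2) + y (k + 1) ^ 2 :=
    Finset.sum_Icc_succ_top (by omega) _
  have h1 : -(∑ i ∈ Finset.Icc 1 k, y i) ≤ ∑ i ∈ Finset.Icc 1 k, (y i) ^ 2 := by
    rw [← Finset.sum_neg_distrib]
    exact Finset.sum_le_sum fun i _ => hneg (y i)
  have h2 : y (k + 1) ≤ y (k + 1) ^ 2 := hself _
  rw [hsplit]
  linarith
end

section
/- Let y_1, ..., y_{k+1} be integers with y_{k+1} = j + ∑_{i=1}^k y_i for a nonnegative integer j ≤ k. Equality ∑_{i=1}^{k+1} y_i^2 = j holds if and only if either (a) y_{k+1} = 0, exactly j of y_1,...,y_k equal -1 and the rest equal 0, or (b) y_{k+1} = 1, exactly j-1 of y_1,...,y_k equal -1 and the rest equal 0. -/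
/-- Equality case: with `y (k+1) = j + ∑_{i=1}^k y i` and `j ≤ k`, one has
`∑_{i=1}^{k+1} (y i)^2 = j` iff either `y (k+1) = 0`, exactly `j` of `y 1, …, y k` equal `-1`
and the rest equal `0`, or `y (k+1) = 1`, exactly `j - 1` of them equal `-1` and the rest `0`. -/
theorem sum_sq_eq_iff (k j : ℕ) (hk : 1 ≤ k) (hjk : j ≤ k) (y : ℕ → ℤ)
    (hcon : y (k + 1) = (j : ℤ) + ∑ i ∈ Finset.Icc 1 k, y i) :
    (∑ i ∈ Finset.Icc 1 (k + 1), (y i) ^ 2 = (j : ℤ)) ↔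
      ((y (k + 1) = 0 ∧ ((Finset.Icc 1 k).filter fun i => y i = -1).card = j ∧
          ∀ i ∈ Finset.Icc 1 k, y i = -1 ∨ y i = 0) ∨
       (y (k + 1) = 1 ∧ ((Finset.Icc 1 k).filter fun i => y i = -1).card + 1 = j ∧
          ∀ i ∈ Finset.Icc 1 k, y i = -1 ∨ y i = 0)) := by
  have hsplit : ∑ i ∈ Finset.Icc 1 (k + 1), (y i) ^ 2
      = ∑ i ∈ Finset.Icc 1 k, (y i) ^ 2 + (y (k + 1)) ^ 2 :=
    Finset.sum_Icc_succ_top (by omega) _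
  set T := Finset.Icc 1 k with hT
  -- key counting lemma
  have key : (∀ i ∈ T, y i = -1 ∨ y i = 0) →
      ∑ i ∈ T, (y i) ^ 2 = ((T.filter fun i => y i = -1).card : ℤ) ∧
      ∑ i ∈ T, y i = -(((T.filter fun i => y i = -1).card : ℤ)) := by
    intro hmem
    have h1 : ∑ i ∈ T.filter (fun i => y i = -1), (y i) ^ 2
        = ((T.filter fun i => y i = -1).card : ℤ) := by
      rw [Finset.sum_congr rfl (fun i hi => by
        rw [(Finset.mem_filter.mp hi).2]; norm_num : ∀ i ∈ T.filter (fun i => y i = -1),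
          (y i) ^ 2 = (1 : ℤ))]
      simp
    have h2 : ∑ i ∈ T.filter (fun i => ¬ y i = -1), (y i) ^ 2 = 0 := by
      apply Finset.sum_eq_zero
      intro i hi
      obtain ⟨hiT, hne⟩ := Finset.mem_filter.mp hi
      rcases hmem i hiT with h | h
      · exact absurd h hne
      · rw [h]; ring
    have h3 : ∑ i ∈ T.filter (fun i => y i = -1), y i
        = -(((T.filter fun i => y i = -1).card : ℤ)) := by
      rw [Finset.sum_congr rfl (fun i hi => (Finset.mem_filter.mp hi).2)]
      simp
    have h4 : ∑ i ∈ T.filter (fun i => ¬ y i = -1), y i = 0 := by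
      apply Finset.sum_eq_zero
      intro i hi
      obtain ⟨hiT, hne⟩ := Finset.mem_filter.mp hi
      rcases hmem i hiT with h | h
      · exact absurd h hne
      · exact h
    constructor
    · rw [← Finset.sum_filter_add_sum_filter_not T (fun i => y i = -1), h1, h2, add_zero]
    · rw [← Finset.sum_filter_add_sum_filter_not T (fun i => y i = -1), h3, h4, add_zero]
  constructor
  · intro h
    rw [hsplit] at h
    have hS : ∑ i ∈ T, y i = y (k + 1) - (j : ℤ) := by rw [hcon]; ring
    have hnn : ∀ i ∈ T, 0 ≤ (y i) ^ 2 + y i := by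
      intro i _
      rcases le_or_gt 0 (y i) with h' | h'
      · nlinarith
      · have : y i ≤ -1 := by omega
        nlinarith
    have hsum : ∑ i ∈ T, ((y i) ^ 2 + y i) = y (k + 1) - (y (k + 1)) ^ 2 := by
      rw [Finset.sum_add_distrib, hS]; linarith
    have h0 : 0 ≤ y (k + 1) - (y (k + 1)) ^ 2 := hsum ▸ Finset.sum_nonneg hnn
    have ht01 : y (k + 1) = 0 ∨ y (k + 1) = 1 := by
      have ha : 0 ≤ y (k + 1) := by nlinarith [sq_nonneg (y (k + 1))]
      have hb : y (k + 1) ≤ 1 := by nlinarith [sq_nonneg (y (k + 1) - 1)]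
      omega
    have hzero : ∀ i ∈ T, (y i) ^ 2 + y i = 0 := by
      have heq : ∑ i ∈ T, ((y i) ^ 2 + y i) = 0 := by
        rcases ht01 with h1 | h1 <;> rw [hsum, h1] <;> ring
      exact fun i hi => (Finset.sum_eq_zero_iff_of_nonneg hnn).mp heq i hi
    have hmem : ∀ i ∈ T, y i = -1 ∨ y i = 0 := by
      intro i hi
      have h1 := hzero i hi
      have h2 : y i * (y i + 1) = 0 := by linear_combination h1
      rcases mul_eq_zero.mp h2 with h3 | h3
      · right; exact h3
      · left; omega
    obtain ⟨_, hcnt⟩ := key hmem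
    rw [hcnt] at hS
    rcases ht01 with h1 | h1
    · left
      refine ⟨h1, ?_, hmem⟩
      rw [h1] at hS
      have : ((T.filter fun i => y i = -1).card : ℤ) = (j : ℤ) := by linarith
      exact_mod_cast this
    · right
      refine ⟨h1, ?_, hmem⟩
      rw [h1] at hS
      have : ((T.filter fun i => y i = -1).card : ℤ) + 1 = (j : ℤ) := by linarith
      exact_mod_cast this
  · rintro (⟨h1, hcard, hmem⟩ | ⟨h1, hcard, hmem⟩) <;>
      obtain ⟨hsq, _⟩ := key hmem <;> rw [hsplit, hsq, h1] <;>
      [skip; skip] <;> push_cast [← hcard] <;> ring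
end

section
/- Let w ∈ S_n and let γ_{h,l} = s_{n_h} ··· s_{n_{l+1}-1}. Then ℓ(w · γ_{h,l}) = ℓ(w) - (n_{l+1} - n_h) if and only if w(n_h) > max{w(n_h + 1), w(n_h + 2), ..., w(n_{l+1})}. -/
/-- The number of inversions of a permutation of `Fin n`. -/
def invCount {n : ℕ} (w : Equiv.Perm (Fin n)) : ℕ :=
  (Finset.univ.filter fun p : Fin n × Fin n => p.1 < p.2 ∧ w p.2 < w p.1).card

/-- The simple transposition `s_m` (1-based) of `S_n`, swapping positions `m` and `m+1`. -/
def sTrans (n : ℕ) [NeZero n] (m : ℕ) : Equiv.Perm (Fin n) :=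
  Equiv.swap (Fin.ofNat n (m - 1 : ℕ)) (Fin.ofNat n (m : ℕ))

lemma swap_pair_lt {n : ℕ} (a b i j : Fin n) (hab : a.val + 1 = b.val)
    (h : ¬(i = a ∧ j = b)) (h' : ¬(i = b ∧ j = a)) :
    Equiv.swap a b i < Equiv.swap a b j ↔ i < j := by
  simp only [Equiv.swap_apply_def, Fin.lt_def]
  simp only [Fin.ext_iff] at h h' ⊢
  split_ifs <;> omega

lemma invCount_mul_swap_lt {n : ℕ} (w : Equiv.Perm (Fin n)) (a b : Fin n)
    (hab : a.val + 1 = b.val) (h : w a < w b) :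
    invCount (w * Equiv.swap a b) = invCount w + 1 := by
  classical
  have hableft : a < b := by rw [Fin.lt_def]; omega
  set φ : Fin n × Fin n → Fin n × Fin n :=
    fun p => (Equiv.swap a b p.1, Equiv.swap a b p.2) with hφ
  have hφφ : ∀ p, φ (φ p) = p := by
    intro p; simp [hφ, Equiv.swap_apply_self]
  have hS : (Finset.univ.filter fun p : Fin n × Fin n =>
        p.1 < p.2 ∧ (w * Equiv.swap a b) p.2 < (w * Equiv.swap a b) p.1)
      = insert (a, b)
          ((Finset.univ.filter fun p : Fin n × Fin n => p.1 < p.2 ∧ w p.2 < w p.1).image φ) := by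
    ext p
    rw [Finset.mem_filter]
    simp only [Finset.mem_insert, Finset.mem_image, Finset.mem_filter, Finset.mem_univ,
      true_and, Equiv.Perm.mul_apply]
    constructor
    · rintro ⟨hlt, hinv⟩
      by_cases hp : p = (a, b)
      · exact Or.inl hp
      · right
        refine ⟨φ p, ⟨?_, ?_⟩, hφφ p⟩
        · rw [hφ]
          rw [swap_pair_lt a b p.1 p.2 hab ?_ ?_]
          · exact hlt
          · intro ⟨e1, e2⟩; exact hp (by rw [Prod.ext_iff]; exact ⟨e1, e2⟩)
          · intro ⟨e1, e2⟩
            rw [e1, e2] at hlt; exact absurd hlt (not_lt.2 hableft.le)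
        · exact hinv
    · rintro (rfl | ⟨q, ⟨hq1, hq2⟩, rfl⟩)
      · refine ⟨hableft, ?_⟩
        simp only [Equiv.swap_apply_left, Equiv.swap_apply_right]
        exact h
      · refine ⟨?_, ?_⟩
        · rw [hφ]
          rw [swap_pair_lt a b q.1 q.2 hab ?_ ?_]
          · exact hq1
          · intro ⟨e1, e2⟩
            rw [e1, e2] at hq2; exact absurd hq2 (not_lt.2 h.le)
          · intro ⟨e1, e2⟩
            rw [e1, e2] at hq1; exact absurd hq1 (not_lt.2 hableft.le)
        · simpa only [hφ, Equiv.swap_apply_self] using hq2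
  have hnotmem : (a, b) ∉
      ((Finset.univ.filter fun p : Fin n × Fin n => p.1 < p.2 ∧ w p.2 < w p.1).image φ) := by
    intro hmem
    rw [Finset.mem_image] at hmem
    obtain ⟨q, hq, hq2⟩ := hmem
    have : q = φ (a, b) := by rw [← hq2, hφφ]
    rw [Finset.mem_filter] at hq
    have h1 := hq.2.1
    rw [this] at h1
    simp only [hφ, Equiv.swap_apply_left, Equiv.swap_apply_right] at h1
    exact absurd h1 (not_lt.2 hableft.le)
  have hinj : Function.Injective φ := Function.LeftInverse.injective hφφ
  rw [invCount, invCount, hS, Finset.card_insert_of_notMem hnotmem,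
    Finset.card_image_of_injective _ hinj]

lemma invCount_mul_swap_gt {n : ℕ} (w : Equiv.Perm (Fin n)) (a b : Fin n)
    (hab : a.val + 1 = b.val) (h : w b < w a) :
    invCount (w * Equiv.swap a b) + 1 = invCount w := by
  have h2 := invCount_mul_swap_lt (w * Equiv.swap a b) a b hab ?_
  · rw [mul_assoc, Equiv.swap_mul_self, mul_one] at h2
    omega
  · simp only [Equiv.Perm.mul_apply, Equiv.swap_apply_left, Equiv.swap_apply_right]
    exact h

lemma invCount_le_mul_swap {n : ℕ} (w : Equiv.Perm (Fin n)) (a b : Fin n)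
    (hab : a.val + 1 = b.val) :
    invCount w ≤ invCount (w * Equiv.swap a b) + 1 := by
  rcases lt_trichotomy (w a) (w b) with hlt | heq | hgt
  · rw [invCount_mul_swap_lt w a b hab hlt]; omega
  · exfalso
    have : a = b := w.injective (Fin.ext (by exact congrArg Fin.val heq) ▸ heq)
    rw [this] at hab; omega
  · rw [invCount_mul_swap_gt w a b hab hgt]

lemma sTrans_eq {n : ℕ} [NeZero n] (m : ℕ) (h1 : 1 ≤ m) (h2 : m < n) (a b : Fin n)
    (ha : a.val = m - 1) (hb : b.val = m) : sTrans n m = Equiv.swap a b := by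
  unfold sTrans
  congr 1
  · exact Fin.ext (by show (m - 1) % n = a.val; rw [Nat.mod_eq_of_lt (by omega), ha])
  · exact Fin.ext (by show m % n = b.val; rw [Nat.mod_eq_of_lt h2, hb])

lemma invCount_bound {n : ℕ} [NeZero n] : ∀ (k nh : ℕ), 1 ≤ nh → nh + k ≤ n →
    ∀ w : Equiv.Perm (Fin n),
    invCount w ≤ invCount (w * ((List.range k).map fun r => sTrans n (nh + r)).prod) + k := by
  intro k
  induction k with
  | zero => intro nh _ _ w; simp
  | succ k ih =>
    intro nh h1 h2 w
    rw [List.range_succ_eq_map]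
    simp only [List.map_cons, List.prod_cons, List.map_map]
    have hre : ((List.range k).map ((fun r => sTrans n (nh + r)) ∘ Nat.succ)).prod
        = ((List.range k).map fun r => sTrans n ((nh + 1) + r)).prod := by
      congr 1
      apply List.map_congr_left
      intro x _
      simp only [Function.comp_apply]
      congr 1
      omega
    rw [hre, Nat.add_zero, ← mul_assoc]
    set a : Fin n := ⟨nh - 1, by omega⟩
    set b : Fin n := ⟨nh, by omega⟩
    rw [sTrans_eq nh h1 (by omega) a b rfl rfl]
    calc invCount w ≤ invCount (w * Equiv.swap a b) + 1 :=
          invCount_le_mul_swap w a b (by simp [a, b]; omega)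
      _ ≤ (invCount ((w * Equiv.swap a b) *
            ((List.range k).map fun r => sTrans n ((nh + 1) + r)).prod) + k) + 1 := by
          have := ih (nh + 1) (by omega) (by omega) (w * Equiv.swap a b)
          omega
      _ = _ := by omega

lemma main_aux {n : ℕ} [NeZero n] : ∀ (k nh : ℕ), 1 ≤ nh → nh + k + 1 ≤ n →
    ∀ (w : Equiv.Perm (Fin n)) (a : Fin n), a.val + 1 = nh →
    (invCount (w * ((List.range (k+1)).map fun r => sTrans n (nh + r)).prod) + (k+1) = invCount w ↔
      ∀ m : Fin n, nh < m.val + 1 → m.val + 1 ≤ nh + k + 1 → w m < w a) := by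
  intro k
  induction k with
  | zero =>
    intro nh h1 h2 w a ha
    set b : Fin n := ⟨nh, by omega⟩
    have hbval : b.val = nh := rfl
    have hab : a.val + 1 = b.val := by omega
    simp only [List.range_succ, List.range_zero, List.nil_append, List.map_cons, List.map_nil,
      List.prod_cons, List.prod_nil, mul_one, Nat.add_zero]
    rw [sTrans_eq nh h1 (by omega) a b (by omega) rfl]
    constructor
    · intro hL m hm1 hm2
      have hm : m = b := Fin.ext (by omega)
      subst hm
      rcases lt_trichotomy (w a) (w b) with hlt | heq | hgt
      · rw [invCount_mul_swap_lt w a b hab hlt] at hL; omega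
      · exact absurd (w.injective heq) (by intro e; rw [e] at ha; omega)
      · exact hgt
    · intro hR
      exact invCount_mul_swap_gt w a b hab (hR b (by omega) (by omega))
  | succ k ih =>
    intro nh h1 h2 w a ha
    set b : Fin n := ⟨nh, by omega⟩
    have hbval : b.val = nh := rfl
    have hab : a.val + 1 = b.val := by omega
    rw [List.range_succ_eq_map]
    simp only [List.map_cons, List.prod_cons, List.map_map, Nat.add_zero]
    have hre : ((List.range (k+1)).map ((fun r => sTrans n (nh + r)) ∘ Nat.succ)).prod
        = ((List.range (k+1)).map fun r => sTrans n ((nh + 1) + r)).prod := by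
      congr 1
      apply List.map_congr_left
      intro x _
      simp only [Function.comp_apply]
      congr 1
      omega
    rw [hre, sTrans_eq nh h1 (by omega) a b (by omega) rfl, ← mul_assoc]
    set w' := w * Equiv.swap a b with hw'
    have hw'b : w' b = w a := by
      simp [hw', Equiv.Perm.mul_apply, Equiv.swap_apply_right]
    have hw'm : ∀ m : Fin n, nh < m.val → w' m = w m := by
      intro m hm
      have hma : m ≠ a := by intro e; rw [e] at hm; omega
      have hmb : m ≠ b := by intro e; rw [e] at hm; omega
      simp [hw', Equiv.Perm.mul_apply, Equiv.swap_apply_of_ne_of_ne hma hmb]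
    have hIH := ih (nh + 1) (by omega) (by omega) w' b (by omega)
    constructor
    · intro hL m hm1 hm2
      rcases lt_trichotomy (w a) (w b) with hlt | heq | hgt
      · exfalso
        have h3 : invCount w' = invCount w + 1 := invCount_mul_swap_lt w a b hab hlt
        have h4 := invCount_bound (k+1) (nh+1) (by omega) (by omega) w'
        omega
      · exfalso
        have : a = b := w.injective heq
        rw [this] at hab; omega
      · have h3 : invCount w' + 1 = invCount w := invCount_mul_swap_gt w a b hab hgt
        by_cases hmb : m = b
        · rw [hmb]; exact hgt
        · have hmval : nh + 1 < m.val + 1 := by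
            rcases Nat.lt_or_ge (nh + 1) (m.val + 1) with h | h
            · exact h
            · exfalso; exact hmb (Fin.ext (by omega))
          have := hIH.1 (by omega) m hmval (by omega)
          rw [hw'b, hw'm m (by omega)] at this
          exact this
    · intro hR
      have hba : w b < w a := hR b (by omega) (by omega)
      have h3 : invCount w' + 1 = invCount w := invCount_mul_swap_gt w a b hab hba
      have h4 : invCount (w' * ((List.range (k+1)).map fun r => sTrans n ((nh+1) + r)).prod)
          + (k+1) = invCount w' := by
        rw [hIH]
        intro m hm1 hm2
        rw [hw'b, hw'm m (by omega)]
        exact hR m (by omega) (by omega)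
      omega

/-- For `w ∈ S_n` and `γ_{h,l} = s_{n_h} ⋯ s_{n_{l+1}-1}`, one has
`ℓ(w·γ_{h,l}) = ℓ(w) - (n_{l+1} - n_h)` iff `w(n_h) > max{w(n_h+1), …, w(n_{l+1})}`. -/
theorem length_mul_gamma_iff (n nh nl1 : ℕ) [NeZero n]
    (h1 : 1 ≤ nh) (h2 : nh < nl1) (h3 : nl1 ≤ n)
    (γ : Equiv.Perm (Fin n))
    (hγ : γ = ((List.range (nl1 - nh)).map fun r => sTrans n (nh + r)).prod)
    (w : Equiv.Perm (Fin n)) (a : Fin n) (ha : a.val + 1 = nh) :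
    invCount (w * γ) + (nl1 - nh) = invCount w ↔
      ∀ m : Fin n, nh < m.val + 1 → m.val + 1 ≤ nl1 → w m < w a := by
  obtain ⟨k, hk⟩ : ∃ k, nl1 - nh = k + 1 := ⟨nl1 - nh - 1, by omega⟩
  have := main_aux k nh h1 (by omega) w a ha
  rw [show nh + k + 1 = nl1 from by omega] at this
  rw [hγ, hk]
  exact this
end
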